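/- Fix d ≥ 3 and order the facets τ_0, τ_1^1, …, τ_1^d, τ_2^1, …, τ_2^d, … of ∂C_d^* first by increasing j and, within a fixed j, by increasing k ∈ {1,…,d}. Then for every j with 1 ≤ j and 2j ≤ d+1 and every k ∈ {1,…,d}, a face G ⊆ τ_j^k is contained in some facet occurring strictly earlier in this order if and only if G does not contain the restriction face r(τ_j^k), where r(τ_1^k) = {y_k} and r(τ_j^k) = {y_k, y_{k+j−1}} for j ≥ 2. -/

import Mathlib

namespace SpherePaper

/-- Vertices of `∂C_d^*`: `(i, false)` plays the role of `x_i` and `(i, true)` of `y_i`,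
with the cyclic index convention `x_{d+k} = x_k` built in via `ZMod d`. -/
abbrev Vtx (d : ℕ) := ZMod d × Bool

/-- The vertex `x_k`. -/
def xv (d k : ℕ) : Vtx d := ((k : ZMod d), false)

/-- The vertex `y_k`. -/
def yv (d k : ℕ) : Vtx d := ((k : ZMod d), true)

/-- The antipodal map `α`, sending `x_k ↦ y_k` and `y_k ↦ x_k`. -/
def alphaV (d : ℕ) (v : Vtx d) : Vtx d := (v.1, !v.2)

/-- The facet `τ_j^k = {y_k, …, y_{k+j-1}} ∪ {x_{k+j}, …, x_{k+d-1}}` of `∂C_d^*`. -/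
def tau (d j k : ℕ) : Finset (Vtx d) :=
  (Finset.range d).image fun t => (((k + t : ℕ) : ZMod d), decide (t < j))

/-- The complex `Γ_j` generated by the facets `τ_j^k`, `1 ≤ k ≤ d`. -/
def Gamma (d j : ℕ) : Set (Finset (Vtx d)) :=
  {F | ∃ k, 1 ≤ k ∧ k ≤ d ∧ F ⊆ tau d j k}

/-- The `n`-th facet `σ_n` of `B(1,d)` (indices read periodically mod `2d`):
`σ_i = {x_1,…,x_i, y_{i+1},…,y_d}` and `σ_{d+i} = {y_1,…,y_i, x_{i+1},…,x_d}`
for `1 ≤ i ≤ d`. -/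
def sigB (d n : ℕ) : Finset (Vtx d) :=
  if (n - 1) % (2 * d) + 1 ≤ d then
    (Finset.range d).image fun t =>
      (((t + 1 : ℕ) : ZMod d), decide ((n - 1) % (2 * d) + 1 < t + 1))
  else
    (Finset.range d).image fun t =>
      (((t + 1 : ℕ) : ZMod d), decide (t + 1 ≤ (n - 1) % (2 * d) + 1 - d))

/-- `F` is a facet (an inclusion-maximal face) of the complex `C`. -/
def IsFacetOf {α : Type*} (C : Set (Finset α)) (F : Finset α) : Prop :=
  F ∈ C ∧ ∀ G ∈ C, F ⊆ G → F = G

private lemma mem_tau_iff {d : ℕ} [NeZero d] (j k : ℕ) (v : Vtx d) :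
    v ∈ tau d j k ↔ v.2 = decide ((v.1 - (k : ZMod d)).val < j) := by
  constructor
  · intro hv
    simp only [tau, Finset.mem_image, Finset.mem_range] at hv
    obtain ⟨t, ht, rfl⟩ := hv
    have h1 : ((((k + t : ℕ) : ZMod d)) - (k : ZMod d)).val = t := by
      have h2 : (((k + t : ℕ) : ZMod d)) - (k : ZMod d) = (t : ZMod d) := by push_cast; ring
      rw [h2, ZMod.val_cast_of_lt ht]
    simp [h1, Nat.mod_eq_of_lt ht]
  · intro hv
    simp only [tau, Finset.mem_image, Finset.mem_range]
    refine ⟨(v.1 - (k : ZMod d)).val, ZMod.val_lt _, ?_⟩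
    have h2 : (((v.1 - (k : ZMod d)).val : ℕ) : ZMod d) = v.1 - (k : ZMod d) :=
      ZMod.natCast_rightInverse _
    have h1 : ((k + (v.1 - (k : ZMod d)).val : ℕ) : ZMod d) = v.1 := by
      rw [Nat.cast_add, h2]; ring
    rw [← hv, h1]

private lemma y_mem_tau {d : ℕ} [NeZero d] {j' k' n : ℕ} (h : yv d n ∈ tau d j' k') :
    (((n : ZMod d)) - (k' : ZMod d)).val < j' := by
  have := (mem_tau_iff j' k' (yv d n)).mp h
  exact of_decide_eq_true this.symm

private lemma val_add_nat {d : ℕ} [NeZero d] (c : ZMod d) (m : ℕ) (h : c.val + m < d) :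
    (c + (m : ZMod d)).val = c.val + m := by
  rw [ZMod.val_add, ZMod.val_natCast, Nat.mod_eq_of_lt (show m < d by omega), Nat.mod_eq_of_lt h]

/-- In the ordering of the facets of `∂C_d^*` with at most given number of
switches, first by increasing `j`, then by increasing `k ∈ {1,…,d}`, a face `G ⊆ τ_j^k`
(for `1 ≤ j`, `2j ≤ d+1`, `1 ≤ k ≤ d`) is contained in a strictly earlier facet if and only
if `G` does not contain the restriction face `r(τ_j^k)`, where `r(τ_1^k) = {y_k}` and
`r(τ_j^k) = {y_k, y_{k+j-1}}` for `j ≥ 2`. -/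
theorem statement0 (d : ℕ) (hd : 3 ≤ d) (j k : ℕ)
    (hj : 1 ≤ j) (hjd : 2 * j ≤ d + 1) (hk1 : 1 ≤ k) (hkd : k ≤ d)
    (G : Finset (Vtx d)) (hG : G ⊆ tau d j k) :
    (G ⊆ tau d 0 1 ∨
        (∃ j' k', 1 ≤ j' ∧ j' < j ∧ 1 ≤ k' ∧ k' ≤ d ∧ G ⊆ tau d j' k') ∨
        (∃ k', 1 ≤ k' ∧ k' < k ∧ G ⊆ tau d j k')) ↔
      ¬ ((if j = 1 then ({yv d k} : Finset (Vtx d)) else {yv d k, yv d (k + j - 1)}) ⊆ G) := by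
  haveI : NeZero d := ⟨by omega⟩
  obtain ⟨m, rfl⟩ : ∃ m, j = m + 1 := ⟨j - 1, by omega⟩
  constructor
  · rintro (h | ⟨j', k', hj'1, hj'j, hk'1, hk'd, h⟩ | ⟨k', hk'1, hk'k, h⟩) hRG
    -- derive the two restriction vertices are in G
    all_goals
      have hyk : yv d k ∈ G := by
        rcases Nat.eq_zero_or_pos m with rfl | hm
        · exact hRG (by simp)
        · exact hRG (by rw [if_neg (by omega)]; exact Finset.mem_insert_self _ _)
      have hyk2 : yv d (k + m) ∈ G := by
        rcases Nat.eq_zero_or_pos m with rfl | hm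
        · simpa using hyk
        · refine hRG ?_
          rw [if_neg (by omega), show k + (m + 1) - 1 = k + m from by omega]
          exact Finset.mem_insert_of_mem (Finset.mem_singleton_self _)
    · exact Nat.not_lt_zero _ (y_mem_tau (h hyk))
    · have ha : ((k : ZMod d) - (k' : ZMod d)).val < j' := y_mem_tau (h hyk)
      have hb : (((k + m : ℕ) : ZMod d) - (k' : ZMod d)).val < j' := y_mem_tau (h hyk2)
      have e1 : ((k + m : ℕ) : ZMod d) - (k' : ZMod d)
          = ((k : ZMod d) - (k' : ZMod d)) + (m : ZMod d) := by push_cast; ring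
      rw [e1, val_add_nat _ _ (by omega)] at hb
      omega
    · have ha : ((k : ZMod d) - (k' : ZMod d)).val < m + 1 := y_mem_tau (h hyk)
      have hb : (((k + m : ℕ) : ZMod d) - (k' : ZMod d)).val < m + 1 := y_mem_tau (h hyk2)
      have e1 : ((k + m : ℕ) : ZMod d) - (k' : ZMod d)
          = ((k : ZMod d) - (k' : ZMod d)) + (m : ZMod d) := by push_cast; ring
      rw [e1, val_add_nat _ _ (by omega)] at hb
      have h0 : ((k : ZMod d) - (k' : ZMod d)).val = 0 := by omega
      have hkk' : (k : ZMod d) = (k' : ZMod d) := sub_eq_zero.mp ((ZMod.val_eq_zero _).mp h0)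
      have hmod : k' ≡ k [MOD d] := ((ZMod.natCast_eq_natCast_iff _ _ _).mp hkk').symm
      have hdvd : d ∣ k - k' := (Nat.modEq_iff_dvd' (le_of_lt hk'k)).mp hmod
      have := Nat.le_of_dvd (by omega) hdvd
      omega
  · intro hRG
    rcases Nat.eq_zero_or_pos m with rfl | hm
    · -- j = 1 case
      have hy : yv d k ∉ G := fun h => hRG (by simpa using h)
      left
      intro v hv
      obtain ⟨v1, v2⟩ := v
      have ht : v2 = decide ((v1 - (k : ZMod d)).val < 0 + 1) := (mem_tau_iff _ _ _).mp (hG hv)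
      rw [mem_tau_iff]
      simp only [Nat.not_lt_zero, decide_false]
      cases v2 with
      | false => rfl
      | true =>
        exfalso
        have ht0 : (v1 - (k : ZMod d)).val = 0 := by
          have := of_decide_eq_true ht.symm; omega
        have hv1 : v1 = (k : ZMod d) := sub_eq_zero.mp ((ZMod.val_eq_zero _).mp ht0)
        subst hv1
        exact hy hv
    · -- j ≥ 2 case
      have hsplit : yv d k ∉ G ∨ yv d (k + m) ∉ G := by
        by_contra hcon
        push_neg at hcon
        refine hRG ?_
        rw [if_neg (by omega), show k + (m + 1) - 1 = k + m from by omega,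
          Finset.insert_subset_iff]
        exact ⟨hcon.1, Finset.singleton_subset_iff.mpr hcon.2⟩
      rcases hsplit with hy | hy
      · -- y_k missing : use τ_m^{k%d+1}
        have hkd' : k % d < d := Nat.mod_lt _ (by omega)
        refine Or.inr (Or.inl ⟨m, k % d + 1, hm, by omega, by omega, by omega, ?_⟩)
        intro v hv
        obtain ⟨v1, v2⟩ := v
        have ht : v2 = decide ((v1 - (k : ZMod d)).val < m + 1) := (mem_tau_iff _ _ _).mp (hG hv)
        have hvk : v1 - (k : ZMod d) = (((v1 - (k : ZMod d)).val : ℕ) : ZMod d) :=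
          (ZMod.natCast_rightInverse _).symm
        have h1t : 1 ≤ (v1 - (k : ZMod d)).val := by
          rcases Nat.eq_zero_or_pos ((v1 - (k : ZMod d)).val) with h0 | h; swap
          · exact h
          exfalso
          have hv1 : v1 = (k : ZMod d) := sub_eq_zero.mp ((ZMod.val_eq_zero _).mp h0)
          have hv2 : v2 = true := by rw [ht, h0]; simp
          subst hv1; subst hv2
          exact hy hv
        rw [mem_tau_iff]
        have hk' : ((k % d + 1 : ℕ) : ZMod d) = (k : ZMod d) + 1 := by
          rw [Nat.cast_add, Nat.cast_one, ZMod.natCast_mod]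
        have hsub : v1 - ((k : ZMod d) + 1)
            = (((v1 - (k : ZMod d)).val - 1 : ℕ) : ZMod d) := by
          rw [Nat.cast_sub h1t, Nat.cast_one, ← hvk]; ring
        have hval : ((((v1 - (k : ZMod d)).val - 1 : ℕ)) : ZMod d).val
            = (v1 - (k : ZMod d)).val - 1 := by
          have := ZMod.val_lt (v1 - (k : ZMod d))
          exact ZMod.val_cast_of_lt (by omega)
        show v2 = decide ((v1 - ((k % d + 1 : ℕ) : ZMod d)).val < m)
        rw [hk', hsub, hval, ht]
        simp only [decide_eq_decide]
        omega
      · -- y_{k+m} missing : use τ_m^k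
        refine Or.inr (Or.inl ⟨m, k, hm, by omega, hk1, hkd, ?_⟩)
        intro v hv
        obtain ⟨v1, v2⟩ := v
        have ht : v2 = decide ((v1 - (k : ZMod d)).val < m + 1) := (mem_tau_iff _ _ _).mp (hG hv)
        rw [mem_tau_iff]
        show v2 = decide ((v1 - (k : ZMod d)).val < m)
        by_cases htm : (v1 - (k : ZMod d)).val = m
        · exfalso
          have hvk : v1 - (k : ZMod d) = (((v1 - (k : ZMod d)).val : ℕ) : ZMod d) :=
            (ZMod.natCast_rightInverse _).symm
          rw [htm] at hvk
          have hv1 : v1 = ((k + m : ℕ) : ZMod d) := by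
            push_cast
            have := sub_eq_iff_eq_add.mp hvk
            rw [this]; ring
          have hv2 : v2 = true := by rw [ht, htm]; simp
          subst hv1; subst hv2
          exact hy hv
        · rw [ht]
          simp only [decide_eq_decide]
          omega

end SpherePaper
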